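/- The following statement is false: if S_n is a sequence of symplectic 4×4 matrices converging to S, and each S_n admits a splitting of ℝ⁴ into two S_n-invariant Lagrangian planes, then S admits a splitting of ℝ⁴ into two S-invariant Lagrangian planes. (A counterexample is given by S_n = P_{1/n} converging to S = P₀.) -/
import Mathlib


open Matrix

/-- The standard 4×4 symplectic matrix `J = [[0, I₂],[-I₂, 0]]`. -/
noncomputable def Jmat : Matrix (Fin 4) (Fin 4) ℝ :=
  !![0, 0, 1, 0;
     0, 0, 0, 1;
     -1, 0, 0, 0;
     0, -1, 0, 0]

/-- `A_ε = [[1, -ε],[ε, 1]]`. -/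
noncomputable def Aeps (ε : ℝ) : Matrix (Fin 2) (Fin 2) ℝ := !![1, -ε; ε, 1]

/-- `B_ε = [[1, -ε],[0, 0]]`. -/
noncomputable def Beps (ε : ℝ) : Matrix (Fin 2) (Fin 2) ℝ := !![1, -ε; 0, 0]

/-- `C_ε = (1/(1+ε²))·[[1, -ε],[ε, 1]]`. -/
noncomputable def Ceps (ε : ℝ) : Matrix (Fin 2) (Fin 2) ℝ :=
  !![1 / (1 + ε ^ 2), -ε / (1 + ε ^ 2); ε / (1 + ε ^ 2), 1 / (1 + ε ^ 2)]

/-- `P_ε = [[A_ε, B_ε],[0, C_ε]]` written out as a 4×4 matrix. -/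
noncomputable def Peps (ε : ℝ) : Matrix (Fin 4) (Fin 4) ℝ :=
  !![1, -ε, 1, -ε;
     ε, 1, 0, 0;
     0, 0, 1 / (1 + ε ^ 2), -ε / (1 + ε ^ 2);
     0, 0, ε / (1 + ε ^ 2), 1 / (1 + ε ^ 2)]

/-- A matrix `S` admits an `S`-invariant Lagrangian splitting of `ℝ⁴`. -/
def HasInvariantLagrangianSplitting (S : Matrix (Fin 4) (Fin 4) ℝ) : Prop :=
  ∃ U V : Submodule ℝ (Fin 4 → ℝ),
    Module.finrank ℝ U = 2 ∧ Module.finrank ℝ V = 2 ∧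
    IsCompl U V ∧
    (∀ u₁ ∈ U, ∀ u₂ ∈ U, u₁ ⬝ᵥ Jmat.mulVec u₂ = 0) ∧
    (∀ w₁ ∈ V, ∀ w₂ ∈ V, w₁ ⬝ᵥ Jmat.mulVec w₂ = 0) ∧
    (∀ u ∈ U, S.mulVec u ∈ U) ∧
    (∀ w ∈ V, S.mulVec w ∈ V)

/-! ### Auxiliary lemmas -/

lemma pairing_eq (x y : Fin 4 → ℝ) :
    x ⬝ᵥ Jmat.mulVec y = x 0 * y 2 + x 1 * y 3 - x 2 * y 0 - x 3 * y 1 := by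
  simp [Jmat, mulVec, dotProduct, Fin.sum_univ_four, vecHead, vecTail]
  ring

set_option maxHeartbeats 1000000 in
lemma peps_symp (ε : ℝ) : (Peps ε)ᵀ * Jmat * Peps ε = Jmat := by
  have hk : (1:ℝ) + ε ^ 2 ≠ 0 := by positivity
  ext i j
  fin_cases i <;> fin_cases j <;>
    simp [Peps, Jmat, Matrix.mul_apply, Fin.sum_univ_four, vecHead, vecTail] <;>
    field_simp <;> ring

lemma peps_mulVec (ε : ℝ) (w : Fin 4 → ℝ) :
    (Peps ε).mulVec w = ![w 0 - ε * w 1 + w 2 - ε * w 3, ε * w 0 + w 1,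
      (w 2 - ε * w 3) / (1 + ε ^ 2), (ε * w 2 + w 3) / (1 + ε ^ 2)] := by
  funext i
  fin_cases i <;>
    simp [Peps, mulVec, dotProduct, Fin.sum_univ_four, vecHead, vecTail] <;> ring

lemma finrank_span_pair' {x y : Fin 4 → ℝ} (h : LinearIndependent ℝ ![x, y]) :
    Module.finrank ℝ (Submodule.span ℝ ({x, y} : Set (Fin 4 → ℝ))) = 2 := by
  have : ({x, y} : Set (Fin 4 → ℝ)) = Set.range ![x, y] := by
    simp [Matrix.range_cons, Matrix.range_empty]; exact Set.pair_comm x y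
  rw [this, finrank_span_eq_card h]
  simp

lemma pos_split (ε : ℝ) (hε : ε ≠ 0) : HasInvariantLagrangianSplitting (Peps ε) := by
  have hk : (1:ℝ) + ε ^ 2 ≠ 0 := by positivity
  have hq : ε ^ 2 * (4 + ε ^ 2) ≠ 0 := by positivity
  set k : ℝ := 1 + ε ^ 2 with hkdef
  set q : ℝ := ε ^ 2 * (4 + ε ^ 2) with hqdef
  set a : ℝ := -2 * k / q with hadef
  set b : ℝ := ε * k / q with hbdef
  set d : ℝ := -k * (2 + ε ^ 2) / q with hddef
  set u1 : Fin 4 → ℝ := ![1, 0, 0, 0] with hu1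
  set u2 : Fin 4 → ℝ := ![0, 1, 0, 0] with hu2
  set v1 : Fin 4 → ℝ := ![a, b, 1, 0] with hv1
  set v2 : Fin 4 → ℝ := ![b, d, 0, 1] with hv2
  set U := Submodule.span ℝ ({u1, u2} : Set (Fin 4 → ℝ)) with hU
  set V := Submodule.span ℝ ({v1, v2} : Set (Fin 4 → ℝ)) with hV
  have memU : ∀ x : Fin 4 → ℝ, x ∈ U ↔ x 2 = 0 ∧ x 3 = 0 := by
    intro x
    rw [hU, Submodule.mem_span_pair]
    constructor
    · rintro ⟨s, t, rfl⟩; simp [hu1, hu2]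
    · rintro ⟨h2, h3⟩
      exact ⟨x 0, x 1, by funext i; fin_cases i <;> simp [hu1, hu2, h2, h3]⟩
  have memV : ∀ x : Fin 4 → ℝ, x ∈ V ↔
      x 0 = a * x 2 + b * x 3 ∧ x 1 = b * x 2 + d * x 3 := by
    intro x
    rw [hV, Submodule.mem_span_pair]
    constructor
    · rintro ⟨s, t, rfl⟩
      constructor <;> simp [hv1, hv2] <;> ring
    · rintro ⟨h0, h1⟩
      refine ⟨x 2, x 3, ?_⟩
      funext i
      fin_cases i <;> simp [hv1, hv2] <;> linarith
  have hindU : LinearIndependent ℝ ![u1, u2] := by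
    rw [LinearIndependent.pair_iff]
    intro s t hst
    constructor
    · have := congrFun hst 0; simpa [hu1, hu2] using this
    · have := congrFun hst 1; simpa [hu1, hu2] using this
  have hindV : LinearIndependent ℝ ![v1, v2] := by
    rw [LinearIndependent.pair_iff]
    intro s t hst
    constructor
    · have := congrFun hst 2; simpa [hv1, hv2] using this
    · have := congrFun hst 3; simpa [hv1, hv2] using this
  refine ⟨U, V, finrank_span_pair' hindU, finrank_span_pair' hindV, ?_, ?_, ?_, ?_, ?_⟩
  · constructor
    · rw [Submodule.disjoint_def]
      intro x hxU hxV
      obtain ⟨h2, h3⟩ := (memU x).mp hxU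
      obtain ⟨h0, h1⟩ := (memV x).mp hxV
      funext i
      fin_cases i <;> simp [h2, h3] at h0 h1 ⊢ <;> simp [h0, h1, h2, h3]
    · rw [codisjoint_iff, Submodule.eq_top_iff']
      intro x
      rw [Submodule.mem_sup]
      refine ⟨x - (x 2 • v1 + x 3 • v2), ?_, x 2 • v1 + x 3 • v2, ?_, by abel⟩
      · rw [memU]; constructor <;> simp [hv1, hv2]
      · exact V.add_mem (V.smul_mem _ (Submodule.subset_span (by simp)))
          (V.smul_mem _ (Submodule.subset_span (by simp)))
  · intro x hx y hy
    obtain ⟨hx2, hx3⟩ := (memU x).mp hx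
    obtain ⟨hy2, hy3⟩ := (memU y).mp hy
    rw [pairing_eq, hx2, hx3, hy2, hy3]; ring
  · intro x hx y hy
    obtain ⟨hx0, hx1⟩ := (memV x).mp hx
    obtain ⟨hy0, hy1⟩ := (memV y).mp hy
    rw [pairing_eq, hx0, hx1, hy0, hy1]; ring
  · intro x hx
    obtain ⟨hx2, hx3⟩ := (memU x).mp hx
    rw [memU, peps_mulVec]
    constructor <;> simp [hx2, hx3]
  · intro x hx
    obtain ⟨hx0, hx1⟩ := (memV x).mp hx
    rw [memV, peps_mulVec]
    constructor <;> simp [hx0, hx1, hadef, hbdef, hddef, hqdef, hkdef] <;>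
      field_simp <;> ring

lemma p0_sub (u : Fin 4 → ℝ) :
    (Peps 0).mulVec u - u = ![u 2, 0, 0, 0] := by
  funext i
  fin_cases i <;>
    simp [Peps, mulVec, dotProduct, Fin.sum_univ_four, vecHead, vecTail]

lemma coord_two_zero (U : Submodule ℝ (Fin 4 → ℝ))
    (hL : ∀ u₁ ∈ U, ∀ u₂ ∈ U, u₁ ⬝ᵥ Jmat.mulVec u₂ = 0)
    (hI : ∀ u ∈ U, (Peps 0).mulVec u ∈ U) (u : Fin 4 → ℝ) (hu : u ∈ U) :
    u 2 = 0 := by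
  have h1 : (Peps 0).mulVec u - u ∈ U := U.sub_mem (hI u hu) hu
  have h2 := hL _ h1 u hu
  rw [p0_sub] at h1 h2
  rw [pairing_eq] at h2
  simp at h2
  nlinarith [h2]

lemma no_split : ¬ HasInvariantLagrangianSplitting (Peps 0) := by
  rintro ⟨U, V, -, -, hc, hLU, hLV, hIU, hIV⟩
  have htop : U ⊔ V = ⊤ := codisjoint_iff.mp hc.codisjoint
  have he3 : (![0,0,1,0] : Fin 4 → ℝ) ∈ U ⊔ V := htop ▸ Submodule.mem_top
  obtain ⟨u, hu, v, hv, huv⟩ := Submodule.mem_sup.mp he3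
  have h1 : u 2 = 0 := coord_two_zero U hLU hIU u hu
  have h2 : v 2 = 0 := coord_two_zero V hLV hIV v hv
  have := congrFun huv 2
  simp [h1, h2] at this

lemma peps_cont : ContinuousAt Peps 0 := by
  apply continuousAt_pi.2
  intro i
  apply continuousAt_pi.2
  intro j
  fin_cases i <;> fin_cases j <;> simp only [Peps] <;>
    simp [vecHead, vecTail] <;>
    fun_prop (disch := intros; positivity)

lemma peps_tendsto :
    Filter.Tendsto (fun n : ℕ => Peps (1 / (n + 1))) Filter.atTop (nhds (Peps 0)) :=
  peps_cont.tendsto.comp tendsto_one_div_add_atTop_nhds_zero_nat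

/-- Lemma 2.5 of Boscaggin–Ortega–Zhao is false: it is not true that invariant
Lagrangian splittings pass to limits of symplectic matrices. -/
theorem stmt16 :
    ¬ (∀ (Sn : ℕ → Matrix (Fin 4) (Fin 4) ℝ) (S : Matrix (Fin 4) (Fin 4) ℝ),
        (∀ n, (Sn n)ᵀ * Jmat * Sn n = Jmat) →
        Filter.Tendsto Sn Filter.atTop (nhds S) →
        (∀ n, HasInvariantLagrangianSplitting (Sn n)) →
        HasInvariantLagrangianSplitting S) := by
  intro h
  exact no_split (h (fun n => Peps (1 / (n + 1))) (Peps 0)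
    (fun n => peps_symp _) peps_tendsto
    (fun n => pos_split _ (by positivity)))
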